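/- Let n ≥ 2, and 0 = r_0 < r_1 < ... < r_t < r_{t+1} = n with δ_i = r_{t+1−i} − r_{t−i}. For 1 ≤ i ≤ t, the degree of f_i(x) := f_{i−1}(x)^{q^{δ_{i−1}}} mod (x^{q^n} − x), with f_0(x) = x^{1+q^{r_1}+...+q^{r_t}}, equals 1 + q^{r_{t−i+2}−r_{t−i+1}} + ... + q^{r_{t+1}−r_{t−i+1}}·(1 + q^{r_1} + ... + q^{r_{t−i}}). -/

import Mathlib

/-- The iterated polynomials `f₀ = f0`, `f_{i+1} = f_i^{q^{δ_i}} mod (x^{q^n} − x)`. -/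
noncomputable def fseq (q n : ℕ) {F : Type*} [Field F] (f0 : Polynomial F) (δ : ℕ → ℕ) :
    ℕ → Polynomial F
  | 0 => f0
  | i + 1 => (fseq q n f0 δ i ^ q ^ δ i) %ₘ (Polynomial.X ^ q ^ n - Polynomial.X)

open Polynomial Finset

lemma geom_le' {q : ℕ} (hq : 2 ≤ q) (n : ℕ) : ∑ k ∈ range n, q ^ k ≤ q ^ n - 1 := by
  induction n with
  | zero => simp
  | succ n ih =>
    rw [sum_range_succ]
    have h1 : 1 ≤ q ^ n := Nat.one_le_pow _ _ (by omega)
    have h2 : 2 * q ^ n ≤ q ^ (n + 1) := by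
      rw [pow_succ]; nlinarith
    omega

lemma dvd_X_pow_sub' {R : Type*} [CommRing R] {N m m' : ℕ} (hN : 1 ≤ N)
    (hm : 1 ≤ m) (hm' : 1 ≤ m') (hle : m' ≤ m) (h : m ≡ m' [MOD N - 1]) :
    (X ^ N - X : R[X]) ∣ X ^ m - X ^ m' := by
  obtain ⟨k, hk⟩ := (Nat.modEq_iff_dvd' hle).mp h.symm
  have h1 : (X ^ m - X ^ m' : R[X]) = X ^ m' * ((X ^ (N - 1)) ^ k - 1) := by
    rw [mul_sub, mul_one, ← pow_mul, ← pow_add]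
    congr 2
    omega
  have h2 : (X ^ N - X : R[X]) = X * (X ^ (N - 1) - 1) := by
    rw [mul_sub, mul_one, ← pow_succ']
    congr 2
    omega
  rw [h1, h2]
  exact mul_dvd_mul (dvd_pow_self X (by omega)) (by simpa using sub_dvd_pow_sub_pow (X ^ (N-1) : R[X]) 1 k)

lemma dvd_X_pow_sub {R : Type*} [CommRing R] {N m m' : ℕ} (hN : 1 ≤ N)
    (hm : 1 ≤ m) (hm' : 1 ≤ m') (h : m ≡ m' [MOD N - 1]) :
    (X ^ N - X : R[X]) ∣ X ^ m - X ^ m' := by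
  rcases le_total m' m with hle | hle
  · exact dvd_X_pow_sub' hN hm hm' hle h
  · exact (dvd_sub_comm).mp (dvd_X_pow_sub' hN hm' hm hle h.symm)

lemma mod_X_pow {F : Type*} [Field F] {N m m' : ℕ} (hN : 2 ≤ N) (hm : 1 ≤ m)
    (hm' : 1 ≤ m') (hm'N : m' < N) (h : m ≡ m' [MOD N - 1]) :
    (X ^ m : F[X]) %ₘ (X ^ N - X) = X ^ m' := by
  have hmonic : (X ^ N - X : F[X]).Monic :=
    monic_X_pow_sub (by simpa [degree_X] using by exact_mod_cast Nat.one_lt_cast.mpr (by omega : 1 < N))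
  have h1 : (X ^ m : F[X]) %ₘ (X ^ N - X) = (X ^ m' : F[X]) %ₘ (X ^ N - X) :=
    modByMonic_eq_of_dvd_sub hmonic (dvd_X_pow_sub (by omega) hm hm' h)
  rw [h1, (modByMonic_eq_self_iff hmonic).mpr]
  have hdeg : (X ^ N - X : F[X]).degree = N := by
    rw [degree_sub_eq_left_of_degree_lt] <;> rw [degree_X_pow] <;> simp [degree_X]
    exact_mod_cast by omega
  rw [hdeg, degree_X_pow]
  exact_mod_cast hm'N

lemma sum_modEq {ι : Type*} {n : ℕ} {s : Finset ι} {f g : ι → ℕ}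
    (h : ∀ j ∈ s, f j ≡ g j [MOD n]) : (∑ j ∈ s, f j) ≡ (∑ j ∈ s, g j) [MOD n] := by
  induction s using Finset.cons_induction with
  | empty => rfl
  | cons a s ha ih =>
    rw [sum_cons, sum_cons]
    exact (h a (mem_cons_self a s)).add (ih fun j hj => h j (mem_cons_of_mem hj))

lemma pow_modEq {q n : ℕ} (hq : 1 ≤ q) (hn : 1 ≤ n) (a : ℕ) :
    q ^ a ≡ q ^ (a % n) [MOD q ^ n - 1] := by
  conv_lhs => rw [← Nat.div_add_mod a n, pow_add, pow_mul]
  have h1 : q ^ n ≡ 1 [MOD q ^ n - 1] :=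
    ((Nat.modEq_iff_dvd' (Nat.one_le_pow _ _ (by omega))).mpr dvd_rfl).symm
  calc (q ^ n) ^ (a / n) * q ^ (a % n)
      ≡ 1 ^ (a / n) * q ^ (a % n) [MOD q ^ n - 1] := ((h1.pow _).mul_right _)
    _ = q ^ (a % n) := by rw [one_pow, one_mul]

lemma pow_modEq' {q n a b : ℕ} (hq : 1 ≤ q) (hn : 1 ≤ n) (h : a % n = b % n) :
    q ^ a ≡ q ^ b [MOD q ^ n - 1] := by
  refine (pow_modEq hq hn a).trans ?_
  rw [h]
  exact (pow_modEq hq hn b).symm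

lemma sum_pow_le {q n m : ℕ} (hq : 2 ≤ q) (e : ℕ → ℕ) (he : ∀ j ∈ range m, e j < n)
    (hinj : ∀ j ∈ range m, ∀ k ∈ range m, e j = e k → j = k) :
    ∑ j ∈ range m, q ^ e j ≤ q ^ n - 1 := by
  calc ∑ j ∈ range m, q ^ e j = ∑ k ∈ (range m).image e, q ^ k := (Finset.sum_image hinj).symm
    _ ≤ ∑ k ∈ range n, q ^ k := by
        apply Finset.sum_le_sum_of_subset
        intro k hk
        simp only [mem_image, mem_range] at hk ⊢
        obtain ⟨j, hj, rfl⟩ := hk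
        exact he j (mem_range.mpr hj)
    _ ≤ q ^ n - 1 := geom_le' hq n

lemma fseq_eq (q n t : ℕ) (hq2 : 2 ≤ q) (hn : 2 ≤ n) (r δ : ℕ → ℕ)
    (hrt : r (t + 1) = n) (hrmono : ∀ j ≤ t, r j < r (j + 1))
    (hδ : ∀ i ≤ t, δ i = r (t + 1 - i) - r (t - i))
    {F : Type*} [Field F] (f0 : Polynomial F)
    (hf0 : f0 = X ^ (∑ j ∈ range (t + 1), q ^ r j)) :
    ∀ i ≤ t, fseq q n f0 δ i
      = X ^ (∑ j ∈ range (t + 1), q ^ ((r j + (n - r (t + 1 - i))) % n)) := by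
  have hstrict : ∀ b ≤ t + 1, ∀ a < b, r a < r b := by
    intro b
    induction b with
    | zero => omega
    | succ b ih =>
      intro hb a ha
      rcases Nat.lt_or_ge a b with hab | hab
      · exact lt_trans (ih (by omega) a hab) (hrmono b (by omega))
      · have : a = b := by omega
        subst this
        exact hrmono a (by omega)
  have hrlt : ∀ j ≤ t, r j < n := fun j hj => hrt ▸ hstrict (t + 1) le_rfl j (by omega)
  have hqn2 : 2 ≤ q ^ n := le_trans hq2 (Nat.le_self_pow (by omega) q)
  -- positivity of the degree sums
  have hpos : ∀ e : ℕ → ℕ, 1 ≤ ∑ j ∈ range (t + 1), q ^ e j := by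
    intro e
    calc 1 ≤ q ^ e 0 := Nat.one_le_pow _ _ (by omega)
      _ ≤ _ := Finset.single_le_sum (f := fun j => q ^ e j) (fun _ _ => Nat.zero_le _)
            (mem_range.mpr (by omega))
  intro i
  induction i with
  | zero =>
    intro _
    simp only [fseq, hf0]
    congr 1
    apply Finset.sum_congr rfl
    intro j hj
    rw [mem_range] at hj
    simp only [Nat.sub_zero, hrt]
    congr 1
    rw [Nat.sub_self, Nat.add_zero, Nat.mod_eq_of_lt (hrlt j (by omega))]
  | succ i ih =>
    intro hi1
    have hit : i ≤ t := by omega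
    have hihyp := ih hit
    show (fseq q n f0 δ i ^ q ^ δ i) %ₘ (X ^ q ^ n - X) = _
    rw [hihyp, ← pow_mul]
    set A := n - r (t + 1 - i) with hA
    set B := n - r (t - i) with hB
    have ht1i : t + 1 - (i + 1) = t - i := by omega
    rw [ht1i]
    have hrsle : r (t - i) < r (t + 1 - i) := by
      have : t + 1 - i = (t - i) + 1 := by omega
      rw [this]
      exact hrmono (t - i) (by omega)
    have hrin : r (t + 1 - i) ≤ n := by
      rcases Nat.lt_or_ge (t + 1 - i) (t + 1) with h | h
      · exact le_of_lt (hrlt _ (by omega))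
      · have : t + 1 - i = t + 1 := by omega
        rw [this, hrt]
    have hδi : δ i = r (t + 1 - i) - r (t - i) := hδ i hit
    have hAB : A + δ i = B := by rw [hA, hB, hδi]; omega
    -- the exponents of the new sum
    have hexplt : ∀ j, (r j + B) % n < n := fun j => Nat.mod_lt _ (by omega)
    apply mod_X_pow hqn2
    · exact Nat.one_le_iff_ne_zero.mpr (Nat.mul_ne_zero
        (Nat.one_le_iff_ne_zero.mp (hpos _)) (Nat.pos_iff_ne_zero.mp (Nat.pow_pos (by omega))))
    · exact hpos _
    · -- the bound
      have hb := sum_pow_le (n := n) (m := t + 1) hq2 (fun j => (r j + B) % n) (fun j _ => hexplt j) ?_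
      · have hb' : ∑ j ∈ range (t + 1), q ^ ((r j + (n - r (t - i))) % n) ≤ q ^ n - 1 := hb
        omega
      · intro j hj k hk hjk
        rw [mem_range] at hj hk
        by_contra hne
        have hmod : r j % n = r k % n := by
          have h1 : (r j + B) ≡ (r k + B) [MOD n] := hjk
          exact Nat.ModEq.add_right_cancel' B h1
        rw [Nat.mod_eq_of_lt (hrlt j (by omega)), Nat.mod_eq_of_lt (hrlt k (by omega))] at hmod
        rcases Nat.lt_or_ge j k with h | h
        · exact absurd hmod (Nat.ne_of_lt (hstrict k (by omega) j h))
        · have : k < j := by omega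
          exact absurd hmod.symm (Nat.ne_of_lt (hstrict j (by omega) k this))
    · -- the congruence
      rw [Finset.sum_mul]
      apply sum_modEq
      intro j _
      rw [← pow_add]
      have h1 : (r j + A) % n + δ i ≡ r j + B [MOD n] := by
        have := (Nat.mod_modEq (r j + A) n).add_right (δ i)
        rwa [Nat.add_assoc, hAB] at this
      exact pow_modEq' (by omega) (by omega) (h1.trans (Nat.mod_modEq _ n).symm)

/-- with `0 = r₀ < r₁ < ⋯ < r_t < r_{t+1} = n`,
`δᵢ = r_{t+1−i} − r_{t−i}`, `f₀(x) = x^{1+q^{r₁}+⋯+q^{r_t}}`, and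
`fᵢ = f_{i−1}^{q^{δ_{i−1}}} mod (x^{q^n} − x)`, for `1 ≤ i ≤ t` one has
`deg fᵢ = 1 + q^{r_{t−i+2}−r_{t−i+1}} + ⋯ + q^{r_{t+1}−r_{t−i+1}}·(1+q^{r₁}+⋯+q^{r_{t−i}})`. -/
theorem stmt_15 (p e₀ : ℕ) [Fact p.Prime] (he : 0 < e₀) (q : ℕ) (hq : q = p ^ e₀)
    (n t : ℕ) (hn : 2 ≤ n)
    (r : ℕ → ℕ) (hr0 : r 0 = 0) (hrt : r (t + 1) = n)
    (hrmono : ∀ j ≤ t, r j < r (j + 1))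
    (F : Type*) [Field F] [CharP F p]
    (δ : ℕ → ℕ) (hδ : ∀ i ≤ t, δ i = r (t + 1 - i) - r (t - i))
    (f0 : Polynomial F) (hf0 : f0 = Polynomial.X ^ (∑ j ∈ Finset.range (t + 1), q ^ r j)) :
    ∀ i, 1 ≤ i → i ≤ t →
      (fseq q n f0 δ i).natDegree
        = 1 + (∑ j ∈ Finset.Icc (t - i + 2) t, q ^ (r j - r (t - i + 1)))
          + q ^ (n - r (t - i + 1)) * (∑ j ∈ Finset.range (t - i + 1), q ^ r j) := by
  have hp2 : 2 ≤ p := (Fact.out : p.Prime).two_le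
  have hq2 : 2 ≤ q := by
    rw [hq]
    calc 2 ≤ p := hp2
      _ ≤ p ^ e₀ := Nat.le_self_pow (by omega) p
  have hstrict : ∀ b ≤ t + 1, ∀ a < b, r a < r b := by
    intro b
    induction b with
    | zero => omega
    | succ b ih =>
      intro hb a ha
      rcases Nat.lt_or_ge a b with hab | hab
      · exact lt_trans (ih (by omega) a hab) (hrmono b (by omega))
      · have : a = b := by omega
        subst this
        exact hrmono a (by omega)
  have hrlt : ∀ j ≤ t, r j < n := fun j hj => hrt ▸ hstrict (t + 1) le_rfl j (by omega)
  intro i hi1 hit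
  rw [fseq_eq q n t hq2 hn r δ hrt hrmono hδ f0 hf0 i hit, natDegree_X_pow]
  have hs : t + 1 - i = t - i + 1 := by omega
  have hst : t - i + 1 ≤ t := by omega
  have hrsn : r (t - i + 1) < n := hrlt _ hst
  have h1 : ∑ j ∈ range (t + 1), q ^ ((r j + (n - r (t + 1 - i))) % n)
      = (∑ j ∈ range (t - i + 1), q ^ ((r j + (n - r (t - i + 1))) % n)
          + q ^ ((r (t - i + 1) + (n - r (t - i + 1))) % n))
        + ∑ j ∈ Ico (t - i + 2) (t + 1), q ^ ((r j + (n - r (t - i + 1))) % n) := by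
    have hc := Finset.sum_Ico_consecutive
      (f := fun j => q ^ ((r j + (n - r (t - i + 1))) % n))
      (Nat.zero_le (t - i + 2)) (show t - i + 2 ≤ t + 1 by omega)
    rw [← Finset.range_eq_Ico, ← Finset.range_eq_Ico] at hc
    have h2 : t - i + 2 = (t - i + 1) + 1 := by omega
    rw [hs, ← hc, h2, sum_range_succ]
  have hmid : (r (t - i + 1) + (n - r (t - i + 1))) % n = 0 := by
    have : r (t - i + 1) + (n - r (t - i + 1)) = n := by omega
    rw [this, Nat.mod_self]
  have hleft : ∑ j ∈ range (t - i + 1), q ^ ((r j + (n - r (t - i + 1))) % n)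
      = q ^ (n - r (t - i + 1)) * ∑ j ∈ range (t - i + 1), q ^ r j := by
    rw [Finset.mul_sum]
    apply Finset.sum_congr rfl
    intro j hj
    rw [mem_range] at hj
    have hjs : r j < r (t - i + 1) := hstrict (t - i + 1) (by omega) j hj
    have : (r j + (n - r (t - i + 1))) % n = (n - r (t - i + 1)) + r j := by
      rw [Nat.mod_eq_of_lt (by omega)]; omega
    rw [this, pow_add]
  have hright : ∑ j ∈ Ico (t - i + 2) (t + 1), q ^ ((r j + (n - r (t - i + 1))) % n)
      = ∑ j ∈ Finset.Icc (t - i + 2) t, q ^ (r j - r (t - i + 1)) := by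
    rw [← Finset.Ico_add_one_right_eq_Icc]
    apply Finset.sum_congr rfl
    intro j hj
    rw [Finset.mem_Ico] at hj
    have hjn : r j < n := hrlt j (by omega)
    have hjs : r (t - i + 1) < r j := hstrict j (by omega) _ (by omega)
    congr 1
    have : r j + (n - r (t - i + 1)) = (r j - r (t - i + 1)) + n := by omega
    rw [this, Nat.add_mod_right, Nat.mod_eq_of_lt (by omega)]
  rw [h1, hmid, hleft, hright, pow_zero]
  ring
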